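/- Let γ : (0,∞) × (0,∞) → [0,∞) be a function such that for every fixed u > 0 the map v ↦ γ(u,v) is monotone nondecreasing. Let N ≥ 2 and let x_1, …, x_N be pairwise distinct points of ℝ³ \ {0}. Then for every r > 0, ∑_{j≠k} (γ(‖x_j − x_k‖, r‖x_j‖)/‖x_j‖) · ⟨x_j, x_j − x_k⟩ ≥ 0, where the sum is over all ordered pairs (j,k) with 1 ≤ j,k ≤ N and j ≠ k, and ⟨·,·⟩ is the Euclidean inner product on ℝ³. -/

import Mathlib

noncomputable section

/-- Let `γ : (0,∞) × (0,∞) → [0,∞)` be nondecreasing in its second argument. For pairwise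
distinct nonzero points `x_1, …, x_N` of `ℝ³` and any `r > 0`,
`∑_{j ≠ k} (γ(‖x_j - x_k‖, r‖x_j‖)/‖x_j‖) ⟨x_j, x_j - x_k⟩ ≥ 0`. -/
theorem gamma_weighted_sum_nonneg (γ : ℝ → ℝ → ℝ)
    (hγnonneg : ∀ u v : ℝ, 0 < u → 0 < v → 0 ≤ γ u v)
    (hγmono : ∀ u : ℝ, 0 < u → ∀ v w : ℝ, 0 < v → v ≤ w → γ u v ≤ γ u w)
    (N : ℕ) (hN : 2 ≤ N) (x : Fin N → EuclideanSpace ℝ (Fin 3))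
    (hinj : Function.Injective x) (hne : ∀ j, x j ≠ 0) (r : ℝ) (hr : 0 < r) :
    0 ≤ ∑ j : Fin N, ∑ k : Fin N,
      if j ≠ k then
        γ ‖x j - x k‖ (r * ‖x j‖) / ‖x j‖ * (inner ℝ (x j) (x j - x k) : ℝ)
      else 0 := by
  set F : Fin N → Fin N → ℝ := fun j k =>
    if j ≠ k then
      γ ‖x j - x k‖ (r * ‖x j‖) / ‖x j‖ * (inner ℝ (x j) (x j - x k) : ℝ)
    else 0 with hF
  have key : ∀ j k : Fin N, 0 ≤ F j k + F k j := by
    intro j k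
    by_cases hjk : j = k
    · simp [hF, hjk]
    · have hkj : k ≠ j := fun h => hjk h.symm
      simp only [hF, if_pos hjk, if_pos hkj, ne_eq, not_false_eq_true, ite_true]
      set sj := ‖x j‖ with hsj
      set sk := ‖x k‖ with hsk
      have hsjp : 0 < sj := norm_pos_iff.mpr (hne j)
      have hskp : 0 < sk := norm_pos_iff.mpr (hne k)
      have hxne : x j - x k ≠ 0 := sub_ne_zero.mpr (fun h => hjk (hinj h))
      have hup : 0 < ‖x j - x k‖ := norm_pos_iff.mpr hxne
      have hrev : ‖x k - x j‖ = ‖x j - x k‖ := norm_sub_rev _ _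
      set u := ‖x j - x k‖ with hu
      set c : ℝ := inner ℝ (x j) (x k) with hc
      have hcs : c ≤ sj * sk := real_inner_le_norm (x j) (x k)
      have e1 : (inner ℝ (x j) (x j - x k) : ℝ) = sj ^ 2 - c := by
        rw [inner_sub_right, real_inner_self_eq_norm_sq]
      have e2 : (inner ℝ (x k) (x k - x j) : ℝ) = sk ^ 2 - c := by
        rw [inner_sub_right, real_inner_self_eq_norm_sq, real_inner_comm]
      rw [hrev, e1, e2]
      set a := γ u (r * sj) with ha
      set b := γ u (r * sk) with hb
      have ha0 : 0 ≤ a := hγnonneg _ _ hup (by positivity)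
      have hb0 : 0 ≤ b := hγnonneg _ _ hup (by positivity)
      have hm : 0 ≤ (a - b) * (sj - sk) := by
        rcases le_total sj sk with h | h
        · have : a ≤ b := hγmono u hup _ _ (by positivity)
            (by nlinarith)
          nlinarith
        · have : b ≤ a := hγmono u hup _ _ (by positivity)
            (by nlinarith)
          exact mul_nonneg (by linarith) (by linarith)
      set p := a / sj with hp
      set q := b / sk with hq
      have hp0 : 0 ≤ p := div_nonneg ha0 hsjp.le
      have hq0 : 0 ≤ q := div_nonneg hb0 hskp.le
      have hpa : p * sj = a := div_mul_cancel₀ a hsjp.ne'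
      have hqb : q * sk = b := div_mul_cancel₀ b hskp.ne'
      rw [← hpa, ← hqb] at hm
      nlinarith [hm, mul_nonneg (add_nonneg hp0 hq0) (sub_nonneg.mpr hcs)]
  have h1 : 0 ≤ ∑ j : Fin N, ∑ k : Fin N, (F j k + F k j) :=
    Finset.sum_nonneg fun j _ => Finset.sum_nonneg fun k _ => key j k
  have h2 : ∑ j : Fin N, ∑ k : Fin N, (F j k + F k j)
      = ∑ j : Fin N, ∑ k : Fin N, F j k + ∑ j : Fin N, ∑ k : Fin N, F k j := by
    rw [← Finset.sum_add_distrib]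
    exact Finset.sum_congr rfl fun j _ => Finset.sum_add_distrib
  have h3 : ∑ j : Fin N, ∑ k : Fin N, F k j = ∑ j : Fin N, ∑ k : Fin N, F j k :=
    Finset.sum_comm
  rw [h2, h3] at h1
  linarith
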